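/- Let G be a diregular (2,2,+2)-digraph and let u, v be vertices with a unique common out-neighbour, N⁺(u) = {u₁, u₂}, N⁺(v) = {v₁, u₂}, u₁ ≠ v₁. Then O(u) ∩ {v, v₁} ≠ ∅, i.e. at least one of v, v₁ is an outlier of u. -/

import Mathlib

open scoped Classical

/-- There is a directed walk of length `n` from `u` to `v` in the digraph with
arc relation `A` (the walk is recorded as its list of `n+1` vertices). -/
def HasWalkLen {V : Type*} (A : V → V → Prop) (n : ℕ) (u v : V) : Prop :=
  ∃ l : List V, l.head? = some u ∧ l.getLast? = some v ∧ l.Chain' A ∧ l.length = n + 1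

/-- The distance from `u` to `v` is at most `n`. -/
def DistLe {V : Type*} (A : V → V → Prop) (n : ℕ) (u v : V) : Prop :=
  ∃ m ≤ n, HasWalkLen A m u v

/-- The distance from `u` to `v` is exactly `n`. -/
def DistEq {V : Type*} (A : V → V → Prop) (n : ℕ) (u v : V) : Prop :=
  HasWalkLen A n u v ∧ ∀ m < n, ¬ HasWalkLen A m u v

/-- A digraph is `k`-geodetic: between any ordered pair of vertices there is at
most one directed path of length at most `k`. -/
def Geodetic {V : Type*} (A : V → V → Prop) (k : ℕ) : Prop :=
  ∀ u v : V, ∀ l₁ l₂ : List V,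
    (l₁.head? = some u ∧ l₁.getLast? = some v ∧ l₁.Chain' A ∧ l₁.length ≤ k + 1) →
    (l₂.head? = some u ∧ l₂.getLast? = some v ∧ l₂.Chain' A ∧ l₂.length ≤ k + 1) →
    l₁ = l₂

/-- Out-neighbourhood. -/
def Nplus {V : Type*} (A : V → V → Prop) (u : V) : Set V := {v | A u v}

/-- Out-degree. -/
noncomputable def outDeg {V : Type*} (A : V → V → Prop) (u : V) : ℕ := {v | A u v}.ncard

/-- In-degree. -/
noncomputable def inDeg {V : Type*} (A : V → V → Prop) (u : V) : ℕ := {v | A v u}.ncard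

/-- `T_k(u)`: the set of vertices at distance at most `k` from `u`. -/
def Tset {V : Type*} (A : V → V → Prop) (k : ℕ) (u : V) : Set V := {v | DistLe A k u v}

/-- `O(u)`: the outliers of `u`, i.e. vertices at distance at least `k+1` from `u`. -/
def Outliers {V : Type*} (A : V → V → Prop) (k : ℕ) (u : V) : Set V := {v | ¬ DistLe A k u v}

lemma no2cycle {V : Type*} {A : V → V → Prop} (hgeo : Geodetic A 2) (a b : V)
    (h1 : A a b) (h2 : A b a) : False := by
  have := hgeo a a [a] [a, b, a] (by simp [List.Chain']) (by simp [List.Chain', List.isChain_cons_cons, h1, h2])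
  simp at this

lemma nopar {V : Type*} {A : V → V → Prop} (hgeo : Geodetic A 2) (a b c : V)
    (h1 : A a b) (h2 : A a c) (h3 : A c b) : False := by
  have := hgeo a b [a, b] [a, c, b] (by simp [List.Chain', List.isChain_cons_cons, h1]) (by simp [List.Chain', List.isChain_cons_cons, h2, h3])
  simp at this

lemma distle2_cases {V : Type*} {A : V → V → Prop} {u w : V} (h : DistLe A 2 u w) :
    w = u ∨ A u w ∨ ∃ x, A u x ∧ A x w := by
  obtain ⟨m, hm, l, h1, h2, h3, h4⟩ := h
  interval_cases m
  · rcases l with _ | ⟨a, _ | ⟨b, l⟩⟩ <;> simp_all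
  · rcases l with _ | ⟨a, _ | ⟨b, _ | ⟨c, l⟩⟩⟩ <;> simp_all [List.Chain', List.isChain_cons_cons]
  · rcases l with _ | ⟨a, _ | ⟨b, _ | ⟨c, _ | ⟨d, l⟩⟩⟩⟩ <;> simp_all
    exact Or.inr (Or.inr ⟨b, (List.isChain_cons_cons.1 h3).1, (List.isChain_cons_cons.1 (List.isChain_cons_cons.1 h3).2).1⟩)

/-- In a diregular `(2,2,+2)`-digraph, for vertices `u, v` with unique common
out-neighbour `u₂` as above, at least one of `v, v₁` is an outlier of `u`. -/
theorem stmt_10 {V : Type*} [Fintype V] (A : V → V → Prop)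
    (hgeo : Geodetic A 2)
    (hdeg : ∀ w, outDeg A w = 2 ∧ inDeg A w = 2)
    (hcard : Fintype.card V = 9)
    (u v u₁ u₂ v₁ : V) (huv : u ≠ v)
    (h12 : u₁ ≠ u₂) (hv2 : v₁ ≠ u₂) (h11 : u₁ ≠ v₁)
    (hu : Nplus A u = {u₁, u₂}) (hv : Nplus A v = {v₁, u₂}) :
    Outliers A 2 u ∩ {v, v₁} ≠ ∅ := by
  intro hempty
  have hv1v : A v v₁ := by
    have : v₁ ∈ Nplus A v := by rw [hv]; simp
    exact this
  have hvu2 : A v u₂ := by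
    have : u₂ ∈ Nplus A v := by rw [hv]; simp
    exact this
  have huu1 : A u u₁ := by
    have : u₁ ∈ Nplus A u := by rw [hu]; simp
    exact this
  have huu2 : A u u₂ := by
    have : u₂ ∈ Nplus A u := by rw [hu]; simp
    exact this
  have hNu : ∀ x, A u x → x = u₁ ∨ x = u₂ := by
    intro x hx
    have : x ∈ Nplus A u := hx
    rw [hu] at this
    simpa using this
  have hvT : DistLe A 2 u v := by
    by_contra hc
    have hmem : v ∈ Outliers A 2 u ∩ ({v, v₁} : Set V) := ⟨hc, by simp⟩
    rw [hempty] at hmem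
    exact hmem
  have hv1T : DistLe A 2 u v₁ := by
    by_contra hc
    have hmem : v₁ ∈ Outliers A 2 u ∩ ({v, v₁} : Set V) := ⟨hc, by simp⟩
    rw [hempty] at hmem
    exact hmem
  have hAv : A u₁ v := by
    rcases distle2_cases hvT with h | h | ⟨x, hx1, hx2⟩
    · exact absurd h.symm huv
    · exact (nopar hgeo u u₂ v huu2 h hvu2).elim
    · rcases hNu x hx1 with h' | h'
      · rw [h'] at hx2; exact hx2
      · rw [h'] at hx2
        exact (no2cycle hgeo u₂ v hx2 hvu2).elim
  rcases distle2_cases hv1T with h | h | ⟨x, hx1, hx2⟩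
  · rw [h] at hv1v
    exact nopar hgeo v u₂ u hvu2 hv1v huu2
  · rcases hNu v₁ h with h' | h'
    · exact h11 h'.symm
    · exact hv2 h'
  · rcases hNu x hx1 with h' | h'
    · rw [h'] at hx2
      exact nopar hgeo u₁ v₁ v hx2 hAv hv1v
    · rw [h'] at hx2
      exact nopar hgeo v v₁ u₂ hv1v hvu2 hx2
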